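/- Let f ∈ Γ(X) and assume A ∩ dom f ≠ ∅. Then w*-cl(epi f* + K) = epi (f + δ_A)*. -/

import Mathlib

open Pointwise

noncomputable section

variable {X : Type*} [AddCommGroup X] [Module ℝ X] [TopologicalSpace X]

/-- Fenchel conjugate, as a function on the weak-* dual. -/
def conjFn (h : X → EReal) : WeakDual ℝ X → EReal :=
  fun p => ⨆ x : X, (p x : EReal) - h x

/-- Epigraph of an extended-real-valued function. -/
def epiFn {V : Type*} (h : V → EReal) : Set (V × ℝ) :=
  {q | h q.1 ≤ (q.2 : EReal)}

/-- Graph of an extended-real-valued function (where it is finite). -/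
def gphFn {V : Type*} (h : V → EReal) : Set (V × ℝ) :=
  {q | h q.1 = (q.2 : EReal)}

/-- Effective domain. -/
def domFn {V : Type*} (h : V → EReal) : Set V :=
  {x | h x < ⊤}

open Classical in
/-- Indicator function of a set. -/
def indicatorE {V : Type*} (D : Set V) : V → EReal :=
  fun x => if x ∈ D then (0 : EReal) else ⊤

/-- Convex cone generated by `D ∪ {0}`. -/
def coneGen {V : Type*} [AddCommGroup V] [Module ℝ V] (D : Set V) : Set V :=
  {0} ∪ {y | ∃ t : ℝ, 0 ≤ t ∧ ∃ x ∈ convexHull ℝ D, y = t • x}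

/-- `h ∈ Γ(X)`: proper, convex and lower semicontinuous. -/
def InGamma (h : X → EReal) : Prop :=
  (∀ x, h x ≠ ⊥) ∧ (∃ x, h x ≠ ⊤) ∧
    Convex ℝ {q : X × ℝ | h q.1 ≤ (q.2 : EReal)} ∧ LowerSemicontinuous h

/-- Solution set `A` of the system `σ = {f i x ≤ 0, i ∈ I; x ∈ C}`. -/
def solSet {I : Type*} (C : Set X) (f : I → X → EReal) : Set X :=
  {x | x ∈ C ∧ ∀ i, f i x ≤ (0 : EReal)}

/-- Characteristic cone `K = cone (epi δ_C* ∪ ⋃ i, epi f_i*)` of the system. -/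
def charCone {I : Type*} (C : Set X) (f : I → X → EReal) : Set (WeakDual ℝ X × ℝ) :=
  coneGen (epiFn (conjFn (indicatorE C)) ∪ ⋃ i, epiFn (conjFn (f i)))

/-- Barrier cone `barr C = dom δ_C*`. -/
def barCone (C : Set X) : Set (WeakDual ℝ X) :=
  domFn (conjFn (indicatorE C))

/-- The Farkas–Minkowski constraint qualification. -/
def IsFM {I : Type*} (C : Set X) (f : I → X → EReal) : Prop :=
  (solSet C f).Nonempty ∧ IsClosed (charCone C f)

/-- Recession function `h^∞ = δ*_{dom h*}`. -/
def recFn (h : X → EReal) : X → EReal :=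
  fun x => ⨆ q ∈ domFn (conjFn h), ((q x : ℝ) : EReal)

/-- Recession cone `D^∞ = ⋂_{t>0} t (D - a)`, for any `a ∈ D`. -/
def recCone (D : Set X) : Set X :=
  {d | ∀ a ∈ D, ∀ t : ℝ, 0 < t → d ∈ t • (D - ({a} : Set X))}

/-- Subdifferential of `h` at `a`. -/
def subdiff (h : X → EReal) (a : X) : Set (WeakDual ℝ X) :=
  {p | (∃ r : ℝ, h a = (r : EReal)) ∧ ∀ x, h a + ((p (x - a) : ℝ) : EReal) ≤ h x}

lemma ereal_sub_le {a s : ℝ} {b : EReal} (hb : b ≠ ⊥) :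
    (a : EReal) - b ≤ (s : EReal) ↔ ((a - s : ℝ) : EReal) ≤ b := by
  rcases eq_or_ne b ⊤ with hT | hT
  · simp [hT]
  · lift b to ℝ using ⟨hT, hb⟩
    rw [← EReal.coe_sub, EReal.coe_le_coe_iff, EReal.coe_le_coe_iff]
    constructor <;> intro <;> linarith

lemma mem_epi_conj_iff {h : X → EReal} (hbot : ∀ x, h x ≠ ⊥) (w : WeakDual ℝ X × ℝ) :
    w ∈ epiFn (conjFn h) ↔ ∀ x, ((w.1 x - w.2 : ℝ) : EReal) ≤ h x := by
  simp only [epiFn, conjFn, Set.mem_setOf_eq, iSup_le_iff]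
  exact forall_congr' fun x => ereal_sub_le (hbot x)

-- smul/add application sanity checks
example (a : ℝ) (q : WeakDual ℝ X) (x : X) : (a • q) x = a * q x := rfl
example (q p : WeakDual ℝ X) (x : X) : (q + p) x = q x + p x := rfl
example (a : ℝ) (w : WeakDual ℝ X × ℝ) : (a • w).1 = a • w.1 := rfl

lemma indicatorE_ne_bot {V : Type*} (D : Set V) (x : V) : indicatorE D x ≠ ⊥ := by
  unfold indicatorE; split <;> simp

lemma mem_epi_conj_indicator_iff {D : Set X} (w : WeakDual ℝ X × ℝ) :
    w ∈ epiFn (conjFn (indicatorE D)) ↔ ∀ x ∈ D, w.1 x ≤ w.2 := by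
  rw [mem_epi_conj_iff (indicatorE_ne_bot D)]
  constructor
  · intro H x hx
    have := H x
    rw [indicatorE, if_pos hx] at this
    have : ((w.1 x - w.2 : ℝ) : EReal) ≤ ((0:ℝ) : EReal) := by simpa using this
    rw [EReal.coe_le_coe_iff] at this; linarith
  · intro H x
    by_cases hx : x ∈ D
    · rw [indicatorE, if_pos hx]
      have : ((w.1 x - w.2 : ℝ) : EReal) ≤ ((0:ℝ) : EReal) := by
        rw [EReal.coe_le_coe_iff]; have := H x hx; linarith
      simpa using this
    · rw [indicatorE, if_neg hx]; exact le_top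

lemma isClosed_epi_conj (h : X → EReal) : IsClosed (epiFn (conjFn h)) := by
  have : epiFn (conjFn h) = ⋂ x : X, {w : WeakDual ℝ X × ℝ | (w.1 x : EReal) - h x ≤ (w.2 : EReal)} := by
    ext w; simp [epiFn, conjFn, iSup_le_iff, Set.mem_iInter]
  rw [this]
  refine isClosed_iInter fun x => ?_
  have hev : Continuous fun w : WeakDual ℝ X × ℝ => w.1 x :=
    (WeakDual.eval_continuous x).comp continuous_fst
  rcases eq_or_ne (h x) ⊥ with hb | hb
  · have : {w : WeakDual ℝ X × ℝ | (w.1 x : EReal) - h x ≤ (w.2 : EReal)} = ∅ := by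
      ext w; simp [hb]
    rw [this]; exact isClosed_empty
  rcases eq_or_ne (h x) ⊤ with hT | hT
  · have : {w : WeakDual ℝ X × ℝ | (w.1 x : EReal) - h x ≤ (w.2 : EReal)} = Set.univ := by
      ext w; simp [hT]
    rw [this]; exact isClosed_univ
  · lift h x to ℝ using ⟨hT, hb⟩ with t ht
    have : {w : WeakDual ℝ X × ℝ | (w.1 x : EReal) - (t:EReal) ≤ (w.2 : EReal)} =
        {w : WeakDual ℝ X × ℝ | w.1 x - w.2 ≤ t} := by
      ext w
      rw [Set.mem_setOf_eq, Set.mem_setOf_eq, ereal_sub_le (EReal.coe_ne_bot t),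
        EReal.coe_le_coe_iff]
    rw [this]
    exact isClosed_le (hev.sub continuous_snd) continuous_const

lemma convex_epi_conj {h : X → EReal} (hbot : ∀ x, h x ≠ ⊥) :
    Convex ℝ (epiFn (conjFn h)) := by
  intro w₁ h₁ w₂ h₂ a b ha hb hab
  rw [mem_epi_conj_iff hbot] at h₁ h₂ ⊢
  intro x
  rcases eq_or_ne (h x) ⊤ with hT | hT
  · rw [hT]; exact le_top
  · lift h x to ℝ using ⟨hT, hbot x⟩ with t ht
    have e₁ : w₁.1 x - w₁.2 ≤ t := by
      have := h₁ x; rw [← ht] at this; rwa [EReal.coe_le_coe_iff] at this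
    have e₂ : w₂.1 x - w₂.2 ≤ t := by
      have := h₂ x; rw [← ht] at this; rwa [EReal.coe_le_coe_iff] at this
    have : (a • w₁ + b • w₂).1 x - (a • w₁ + b • w₂).2
        = a * (w₁.1 x - w₁.2) + b * (w₂.1 x - w₂.2) := by
      show (a • w₁.1 + b • w₂.1) x - (a * w₁.2 + b * w₂.2) = _
      show a * w₁.1 x + b * w₂.1 x - (a * w₁.2 + b * w₂.2) = _
      ring
    rw [EReal.coe_le_coe_iff, this]
    have habt : a * t + b * t = t := by rw [← add_mul, hab, one_mul]
    nlinarith [mul_le_mul_of_nonneg_left e₁ ha, mul_le_mul_of_nonneg_left e₂ hb]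

lemma lsc_isClosed_epi {h : X → EReal} (hl : LowerSemicontinuous h) :
    IsClosed (epiFn h) := by
  rw [← isOpen_compl_iff, isOpen_iff_mem_nhds]
  rintro ⟨x, r⟩ hxr
  simp only [Set.mem_compl_iff, epiFn, Set.mem_setOf_eq, not_le] at hxr
  obtain ⟨t, hrt, hth⟩ := EReal.exists_between_coe_real hxr
  have hU : ∀ᶠ z in nhds x, (t : EReal) < h z := hl x _ hth
  have h2 : Set.Iio t ∈ nhds r := Iio_mem_nhds (by exact_mod_cast hrt)
  rw [nhds_prod_eq]
  refine Filter.mem_of_superset (Filter.prod_mem_prod hU h2) ?_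
  rintro ⟨z, ρ⟩ ⟨hz, hρ⟩
  simp only [Set.mem_compl_iff, epiFn, Set.mem_setOf_eq, not_le]
  exact lt_trans (by exact_mod_cast hρ) hz

lemma weakdual_add_apply (q p : WeakDual ℝ X) (x : X) : (q + p) x = q x + p x := rfl

lemma weakdual_smul_apply (a : ℝ) (q : WeakDual ℝ X) (x : X) : (a • q) x = a * q x := rfl

lemma prod_decomp {Y : Type*} [AddCommGroup Y] [Module ℝ Y] [TopologicalSpace Y]
    (F : Y × ℝ →L[ℝ] ℝ) (z : Y × ℝ) : F z = F (z.1, 0) + z.2 * F (0, 1) := by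
  have hz : z = (z.1, (0:ℝ)) + z.2 • ((0:Y), (1:ℝ)) := by
    ext <;> simp
  calc F z = F ((z.1, (0:ℝ)) + z.2 • ((0:Y), (1:ℝ))) := by rw [← hz]
    _ = F (z.1, 0) + z.2 * F (0, 1) := by
        rw [map_add, map_smul]; simp [smul_eq_mul]

lemma mem_epi_of_coe {h : X → EReal} {x : X} {ρ t : ℝ} (hx : h x = (t : EReal)) (ht : t ≤ ρ) :
    (x, ρ) ∈ epiFn h := by
  simp only [epiFn, Set.mem_setOf_eq, hx]
  exact_mod_cast ht

lemma minorant_of_sep {h : X → EReal} (hbot : ∀ x, h x ≠ ⊥) (F : X × ℝ →L[ℝ] ℝ) (u : ℝ)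
    (hFlt : ∀ a ∈ epiFn h, F a < u) (hc : F (0, 1) < 0) :
    ∃ (q : WeakDual ℝ X) (s : ℝ), (∀ x, ((q x - s : ℝ) : EReal) ≤ h x) ∧
      (∀ z : X, q z - s = (-(F (0,1)))⁻¹ * (F (z, 0) - u)) := by
  have hdpos : 0 < -(F (0,1)) := by linarith
  refine ⟨((-(F (0,1)))⁻¹ • F.comp (ContinuousLinearMap.inl ℝ X ℝ) : X →L[ℝ] ℝ),
    u * (-(F (0,1)))⁻¹, ?_, ?_⟩
  · intro x
    rcases eq_or_ne (h x) ⊤ with hT | hT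
    · rw [hT]; exact le_top
    · lift h x to ℝ using ⟨hT, hbot x⟩ with ρ hρ
      have hmem : (x, ρ) ∈ epiFn h := mem_epi_of_coe hρ.symm le_rfl
      have h1 : F (x, 0) + ρ * F (0,1) < u := by
        have := hFlt _ hmem
        rw [prod_decomp F (x, ρ)] at this
        simpa using this
      have key : F (x, 0) - u ≤ (-(F (0,1))) * ρ := by linarith
      rw [EReal.coe_le_coe_iff]
      show (-(F (0,1)))⁻¹ * F (x, 0) - u * (-(F (0,1)))⁻¹ ≤ ρ
      calc (-(F (0,1)))⁻¹ * F (x, 0) - u * (-(F (0,1)))⁻¹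
          = (-(F (0,1)))⁻¹ * (F (x, 0) - u) := by ring
        _ ≤ (-(F (0,1)))⁻¹ * ((-(F (0,1))) * ρ) := mul_le_mul_of_nonneg_left key (inv_nonneg.2 hdpos.le)
        _ = ρ := by rw [← mul_assoc, inv_mul_cancel₀ hdpos.ne', one_mul]
  · intro z
    show (-(F (0,1)))⁻¹ * F (z, 0) - u * (-(F (0,1)))⁻¹ = (-(F (0,1)))⁻¹ * (F (z, 0) - u)
    ring

lemma exists_minorant [IsTopologicalAddGroup X] [ContinuousSMul ℝ X] [LocallyConvexSpace ℝ X]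
    {h : X → EReal} (hΓ : InGamma h) :
    ∃ (q : WeakDual ℝ X) (s : ℝ), ∀ x, ((q x - s : ℝ) : EReal) ≤ h x := by
  obtain ⟨hbot, ⟨x₀, hx₀⟩, hconv, hlsc⟩ := hΓ
  have hr₀ : h x₀ = (((h x₀).toReal : ℝ) : EReal) := (EReal.coe_toReal hx₀ (hbot x₀)).symm
  set r₀ := (h x₀).toReal
  have hnot : (x₀, r₀ - 1) ∉ epiFn h := by
    simp only [epiFn, Set.mem_setOf_eq, hr₀]
    rw [EReal.coe_le_coe_iff]; linarith
  obtain ⟨F, u, hFlt, hFgt⟩ := geometric_hahn_banach_closed_point hconv (lsc_isClosed_epi hlsc) hnot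
  have h1 : F (x₀, 0) + r₀ * F (0,1) < u := by
    have := hFlt _ (mem_epi_of_coe hr₀ le_rfl)
    rw [prod_decomp F (x₀, r₀)] at this; simpa using this
  have h2 : u < F (x₀, 0) + (r₀ - 1) * F (0,1) := by
    have := hFgt
    rw [prod_decomp F (x₀, r₀ - 1)] at this; simpa using this
  have hc : F (0,1) < 0 := by nlinarith
  obtain ⟨q, s, hmin, -⟩ := minorant_of_sep hbot F u hFlt hc
  exact ⟨q, s, hmin⟩

lemma fenchelMoreau [IsTopologicalAddGroup X] [ContinuousSMul ℝ X] [LocallyConvexSpace ℝ X]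
    {h : X → EReal} (hΓ : InGamma h) (y : X) (β : ℝ)
    (H : ∀ (q : WeakDual ℝ X) (s : ℝ), (∀ x, ((q x - s : ℝ) : EReal) ≤ h x) → q y - s ≤ β) :
    h y ≤ (β : EReal) := by
  by_contra hcon
  push_neg at hcon
  obtain ⟨hbot, ⟨x₀, hx₀⟩, hconv, hlsc⟩ := hΓ
  have hnot : (y, β) ∉ epiFn h := by
    simp only [epiFn, Set.mem_setOf_eq, not_le]; exact hcon
  obtain ⟨F, u, hFlt, hFgt⟩ := geometric_hahn_banach_closed_point hconv (lsc_isClosed_epi hlsc) hnot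
  have hr₀ : h x₀ = (((h x₀).toReal : ℝ) : EReal) := (EReal.coe_toReal hx₀ (hbot x₀)).symm
  set r₀ := (h x₀).toReal
  have hvert : ∀ ρ : ℝ, r₀ ≤ ρ → F (x₀, 0) + ρ * F (0,1) < u := by
    intro ρ hρ
    have := hFlt _ (mem_epi_of_coe hr₀ hρ)
    rw [prod_decomp F (x₀, ρ)] at this; simpa using this
  have hcle : F (0,1) ≤ 0 := by
    by_contra hc0
    push_neg at hc0
    have h2 : (u - F (x₀, 0)) / F (0,1) ≤ max r₀ ((u - F (x₀, 0)) / F (0,1)) := le_max_right _ _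
    rw [div_le_iff₀ hc0] at h2
    have h1 := hvert _ (le_max_left r₀ ((u - F (x₀, 0)) / F (0,1)))
    nlinarith
  have hFy : u < F (y, 0) + β * F (0,1) := by
    have := hFgt; rw [prod_decomp F (y, β)] at this; simpa using this
  rcases hcle.lt_or_eq with hlt | heq
  · obtain ⟨q, s, hmin, hval⟩ := minorant_of_sep hbot F u hFlt hlt
    have hH := H q s hmin
    rw [hval y] at hH
    have hdpos : 0 < -(F (0,1)) := by linarith
    have hkey : β * (-(F (0,1))) < F (y, 0) - u := by linarith
    have h5 : (-(F (0,1)))⁻¹ * (β * (-(F (0,1)))) < (-(F (0,1)))⁻¹ * (F (y, 0) - u) :=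
      mul_lt_mul_of_pos_left hkey (inv_pos.2 hdpos)
    rw [show (-(F (0,1)))⁻¹ * (β * (-(F (0,1)))) = β * ((-(F (0,1)))⁻¹ * (-(F (0,1)))) by ring,
      inv_mul_cancel₀ hdpos.ne', mul_one] at h5
    linarith
  · -- F (0,1) = 0
    obtain ⟨q₂, s₂, hmin₂⟩ := exists_minorant ⟨hbot, ⟨x₀, hx₀⟩, hconv, hlsc⟩
    have hFy0 : u < F (y, 0) := by rw [heq] at hFy; linarith
    have hdom : ∀ x, h x ≠ ⊤ → F (x, 0) < u := by
      intro x hT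
      have hx : h x = ((h x).toReal : EReal) := (EReal.coe_toReal hT (hbot x)).symm
      have := hFlt _ (mem_epi_of_coe hx le_rfl)
      rw [prod_decomp F (x, (h x).toReal), heq] at this
      simpa using this
    set Fq : WeakDual ℝ X := (F.comp (ContinuousLinearMap.inl ℝ X ℝ) : X →L[ℝ] ℝ) with hFq
    have happ : ∀ z : X, Fq z = F (z, 0) := fun z => rfl
    have hminT : ∀ t : ℝ, 0 ≤ t → ∀ x, (((q₂ + t • Fq) x - (s₂ + t * u) : ℝ) : EReal) ≤ h x := by
      intro t ht x
      rcases eq_or_ne (h x) ⊤ with hT | hT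
      · rw [hT]; exact le_top
      · have hρ : h x = ((h x).toReal : EReal) := (EReal.coe_toReal hT (hbot x)).symm
        have hm : q₂ x - s₂ ≤ (h x).toReal := by
          have := hmin₂ x; rw [hρ] at this; rwa [EReal.coe_le_coe_iff] at this
        have hFxu : F (x, 0) < u := hdom x hT
        rw [hρ, EReal.coe_le_coe_iff, weakdual_add_apply, weakdual_smul_apply, happ]
        nlinarith
    have hHT : ∀ t : ℝ, 0 ≤ t → q₂ y + t * F (y, 0) - (s₂ + t * u) ≤ β := by
      intro t ht
      have := H (q₂ + t • Fq) (s₂ + t * u) (hminT t ht)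
      rwa [weakdual_add_apply, weakdual_smul_apply, happ] at this
    have hepos : 0 < F (y, 0) - u := by linarith
    have h3 : (β - q₂ y + s₂ + 1) / (F (y, 0) - u) ≤
        max 0 ((β - q₂ y + s₂ + 1) / (F (y, 0) - u)) := le_max_right _ _
    rw [div_le_iff₀ hepos] at h3
    have h4 := hHT _ (le_max_left 0 ((β - q₂ y + s₂ + 1) / (F (y, 0) - u)))
    nlinarith

def evalLM (x : X) : WeakDual ℝ X →ₗ[ℝ] ℝ where
  toFun := fun q => q x
  map_add' := fun _ _ => rfl
  map_smul' := fun _ _ => rfl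

lemma weakdual_dual_repr (T : WeakDual ℝ X →L[ℝ] ℝ) :
    ∃ x₀ : X, ∀ q : WeakDual ℝ X, T q = q x₀ := by
  have hinj : Function.Injective ⇑(topDualPairing ℝ X) := by
    intro a b hab
    ext z
    have := congrFun (congrArg (fun (l : X →ₗ[ℝ] ℝ) => (l : X → ℝ)) hab) z
    exact this
  have hemb := WeakBilin.isEmbedding (B := topDualPairing ℝ X) hinj
  have h1 : T ⁻¹' (Set.Ioo (-1 : ℝ) 1) ∈ nhds (0 : WeakDual ℝ X) := by
    apply T.continuous.continuousAt.preimage_mem_nhds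
    rw [map_zero]
    exact Ioo_mem_nhds (by norm_num) (by norm_num)
  replace h1 : T ⁻¹' (Set.Ioo (-1 : ℝ) 1) ∈ Filter.comap
      (fun (p : WeakDual ℝ X) y => (topDualPairing ℝ X) p y)
      (nhds (fun y => (topDualPairing ℝ X) (0 : WeakDual ℝ X) y)) := by
    convert h1 using 1; exact (hemb.toIsInducing.nhds_eq_comap 0).symm
  rw [Filter.mem_comap] at h1
  obtain ⟨S, hS, hSsub⟩ := h1
  have hzero : (fun y => (topDualPairing ℝ X) (0 : WeakDual ℝ X) y) = (fun _ => (0:ℝ)) := by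
    funext y; rfl
  rw [hzero, nhds_pi, Filter.mem_pi] at hS
  obtain ⟨I, hIfin, V, hV, hVsub⟩ := hS
  have hker : ∀ q : WeakDual ℝ X, (∀ x ∈ I, q x = 0) → T q = 0 := by
    intro q hq
    by_contra hTq
    set cc : ℝ := 2 / T q with hcc
    have hmem : cc • q ∈ (fun (p : WeakDual ℝ X) y => (topDualPairing ℝ X) p y) ⁻¹' S := by
      apply hVsub
      intro y hy
      have : (topDualPairing ℝ X) (cc • q) y = cc * q y := rfl
      show (topDualPairing ℝ X) (cc • q) y ∈ V y
      rw [this, hq y hy, mul_zero]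
      exact mem_of_mem_nhds (hV y)
    have h2 : T (cc • q) ∈ Set.Ioo (-1:ℝ) 1 := hSsub hmem
    rw [map_smul, smul_eq_mul, hcc, div_mul_cancel₀ 2 hTq] at h2
    simp only [Set.mem_Ioo] at h2
    linarith [h2.2]
  haveI : Finite ↥I := hIfin.to_subtype
  haveI : Fintype ↥I := Fintype.ofFinite ↥I
  set L : ↥I → (WeakDual ℝ X →ₗ[ℝ] ℝ) := fun i => evalLM (i : X) with hL
  have hsub : ⨅ i, LinearMap.ker (L i) ≤ LinearMap.ker (T : WeakDual ℝ X →ₗ[ℝ] ℝ) := by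
    intro q hq
    rw [Submodule.mem_iInf] at hq
    have : ∀ x ∈ I, q x = 0 := by
      intro x hx
      exact hq ⟨x, hx⟩
    exact hker q this
  have hspan := mem_span_of_iInf_ker_le_ker hsub
  obtain ⟨c, hc⟩ := (Submodule.mem_span_range_iff_exists_fun ℝ).1 hspan
  refine ⟨∑ i : ↥I, c i • (i : X), fun q => ?_⟩
  have h3 : (∑ i : ↥I, c i • L i) q = T q := by rw [hc]; rfl
  rw [← h3]
  rw [LinearMap.sum_apply]
  have h4 : ∀ i : ↥I, (c i • L i) q = c i * q (i : X) := fun i => rfl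
  simp_rw [h4]
  rw [map_sum]
  congr 1
  funext i
  rw [map_smul, smul_eq_mul]

lemma zero_mem_coneGen {V : Type*} [AddCommGroup V] [Module ℝ V] (D : Set V) :
    (0 : V) ∈ coneGen D := Or.inl rfl

lemma smul_mem_coneGen {V : Type*} [AddCommGroup V] [Module ℝ V] {D : Set V} {t : ℝ}
    (ht : 0 ≤ t) {z : V} (hz : z ∈ D) : t • z ∈ coneGen D :=
  Or.inr ⟨t, ht, z, subset_convexHull ℝ D hz, rfl⟩

lemma coneGen_subset {V : Type*} [AddCommGroup V] [Module ℝ V] {D S : Set V}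
    (hS : Convex ℝ S) (h0 : (0 : V) ∈ S) (hsmul : ∀ t : ℝ, 0 ≤ t → ∀ z ∈ S, t • z ∈ S)
    (hD : D ⊆ S) : coneGen D ⊆ S := by
  rintro y (rfl | ⟨t, ht, z, hz, rfl⟩)
  · exact h0
  · have : z ∈ S := by
      have := convexHull_mono hD hz
      rwa [hS.convexHull_eq] at this
    exact hsmul t ht z this

lemma convex_coneGen {V : Type*} [AddCommGroup V] [Module ℝ V] (D : Set V) :
    Convex ℝ (coneGen D) := by
  rintro u hu v hv a b ha hb hab
  rcases hu with hu | ⟨t₁, ht₁, z₁, hz₁, rfl⟩ <;>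
    rcases hv with hv | ⟨t₂, ht₂, z₂, hz₂, rfl⟩
  · rw [Set.mem_singleton_iff] at hu hv; rw [hu, hv]
    simp only [smul_zero, add_zero]
    exact zero_mem_coneGen D
  · rw [Set.mem_singleton_iff] at hu; rw [hu]
    refine Or.inr ⟨b * t₂, mul_nonneg hb ht₂, z₂, hz₂, ?_⟩
    rw [smul_zero, zero_add, smul_smul]
  · rw [Set.mem_singleton_iff] at hv; rw [hv]
    refine Or.inr ⟨a * t₁, mul_nonneg ha ht₁, z₁, hz₁, ?_⟩
    rw [smul_zero, add_zero, smul_smul]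
  · set τ := a * t₁ + b * t₂ with hτ
    have hτ0 : 0 ≤ τ := by positivity
    rcases hτ0.lt_or_eq with hτpos | hτeq
    · refine Or.inr ⟨τ, hτ0, (a * t₁ / τ) • z₁ + (b * t₂ / τ) • z₂, ?_, ?_⟩
      · exact (convex_convexHull ℝ D) hz₁ hz₂ (by positivity) (by positivity)
          (by field_simp; exact hτ.symm)
      · rw [smul_add, smul_smul, smul_smul, smul_smul, smul_smul]
        congr 1
        · congr 1; field_simp
        · congr 1; field_simp
    · have h1 : a * t₁ = 0 ∧ b * t₂ = 0 := by
        constructor <;> nlinarith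
      rw [smul_smul, smul_smul, h1.1, h1.2, zero_smul, zero_smul, add_zero]
      exact zero_mem_coneGen D

lemma inGamma_indicator {C : Set X} (hCne : C.Nonempty) (hCcl : IsClosed C) (hCcv : Convex ℝ C) :
    InGamma (indicatorE C) := by
  refine ⟨indicatorE_ne_bot C, ⟨hCne.choose, ?_⟩, ?_, ?_⟩
  · rw [indicatorE, if_pos hCne.choose_spec]; simp
  · have : {q : X × ℝ | indicatorE C q.1 ≤ (q.2 : EReal)} = C ×ˢ Set.Ici (0 : ℝ) := by
      ext ⟨x, r⟩
      simp only [Set.mem_setOf_eq, Set.mem_prod, Set.mem_Ici, indicatorE]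
      split_ifs with hx
      · simp [hx, EReal.coe_nonneg]
      · simp [hx]
    rw [this]
    exact hCcv.prod (convex_Ici 0)
  · intro x y hy
    by_cases hx : x ∈ C
    · rw [indicatorE, if_pos hx] at hy
      refine Filter.Eventually.of_forall fun z => lt_of_lt_of_le hy ?_
      rw [indicatorE]; split_ifs <;> simp
    · rw [indicatorE, if_neg hx] at hy
      have : Cᶜ ∈ nhds x := hCcl.isOpen_compl.mem_nhds hx
      filter_upwards [this] with z hz
      rwa [indicatorE, if_neg hz]

lemma mem_epi_conj_add_indicator_iff {g : X → EReal} (hbot : ∀ x, g x ≠ ⊥) {A : Set X}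
    (w : WeakDual ℝ X × ℝ) :
    w ∈ epiFn (conjFn (fun x => g x + indicatorE A x)) ↔
      ∀ x ∈ A, ((w.1 x - w.2 : ℝ) : EReal) ≤ g x := by
  rw [mem_epi_conj_iff (fun x => by
    rw [Ne, EReal.add_eq_bot_iff]
    push_neg
    exact ⟨hbot x, indicatorE_ne_bot A x⟩)]
  constructor
  · intro H x hx
    have := H x
    rwa [indicatorE, if_pos hx, add_zero] at this
  · intro H x
    by_cases hx : x ∈ A
    · rw [indicatorE, if_pos hx, add_zero]; exact H x hx
    · rw [indicatorE, if_neg hx, EReal.add_top_of_ne_bot (hbot x)]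
      exact le_top

lemma charCone_subset {I : Type*} {C : Set X} {f : I → X → EReal}
    (hf : ∀ i x, f i x ≠ ⊥) :
    charCone C f ⊆ {w : WeakDual ℝ X × ℝ | ∀ x ∈ solSet C f, w.1 x ≤ w.2} := by
  apply coneGen_subset
  · -- convexity of S
    intro w₁ h₁ w₂ h₂ a b ha hb hab x hx
    have e : (a • w₁ + b • w₂).1 x = a * w₁.1 x + b * w₂.1 x := rfl
    have e2 : (a • w₁ + b • w₂).2 = a * w₁.2 + b * w₂.2 := rfl
    rw [Set.mem_setOf_eq] at h₁ h₂
    rw [e, e2]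
    exact add_le_add (mul_le_mul_of_nonneg_left (h₁ x hx) ha)
      (mul_le_mul_of_nonneg_left (h₂ x hx) hb)
  · intro x _; exact le_refl 0
  · intro t ht w hw x hx
    have e : (t • w).1 x = t * w.1 x := rfl
    have e2 : (t • w).2 = t * w.2 := rfl
    rw [Set.mem_setOf_eq] at hw
    rw [e, e2]
    exact mul_le_mul_of_nonneg_left (hw x hx) ht
  · rintro w (hw | hw)
    · intro x hx
      exact (mem_epi_conj_indicator_iff w).1 hw x hx.1
    · rw [Set.mem_iUnion] at hw
      obtain ⟨i, hwi⟩ := hw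
      intro x hx
      have h1 := (mem_epi_conj_iff (hf i) w).1 hwi x
      have h2 : ((w.1 x - w.2 : ℝ) : EReal) ≤ ((0:ℝ) : EReal) := by
        refine le_trans h1 ?_
        rw [EReal.coe_zero]
        exact hx.2 i
      rw [EReal.coe_le_coe_iff] at h2
      linarith

lemma sum_subset {I : Type*} {C : Set X} {f : I → X → EReal} {g : X → EReal}
    (hbot : ∀ x, g x ≠ ⊥) (hf : ∀ i x, f i x ≠ ⊥) :
    epiFn (conjFn g) + charCone C f ⊆
      epiFn (conjFn (fun x => g x + indicatorE (solSet C f) x)) := by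
  rintro w ⟨u, hu, v, hv, rfl⟩
  rw [mem_epi_conj_add_indicator_iff hbot]
  intro x hx
  have h1 := (mem_epi_conj_iff hbot u).1 hu x
  have h2 : v.1 x ≤ v.2 := charCone_subset hf hv x hx
  have e : ((u + v).1 x - (u + v).2 : ℝ) = (u.1 x - u.2) + (v.1 x - v.2) := by
    have : (u + v).1 x = u.1 x + v.1 x := rfl
    have e2 : (u + v).2 = u.2 + v.2 := rfl
    rw [this, e2]; ring
  rw [e]
  refine le_trans ?_ h1
  rw [EReal.coe_le_coe_iff]
  linarith

lemma inv_step {c α q s : ℝ} (hc : 0 < c) (h : α ≤ q + s * c) :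
    -(c⁻¹ * q) - s ≤ -(α * c⁻¹) := by
  have h1 := mul_le_mul_of_nonneg_left h (inv_nonneg.2 hc.le)
  have l2 : c⁻¹ * (q + s * c) = c⁻¹ * q + s := by
    rw [mul_add, mul_comm s c, ← mul_assoc, inv_mul_cancel₀ hc.ne', one_mul]
  rw [l2] at h1
  linarith

lemma inv_step2 {c α q s : ℝ} (hc : 0 < c) (h : -(c⁻¹ * q) - s ≤ -(α * c⁻¹)) :
    α ≤ q + s * c := by
  have h1 := mul_le_mul_of_nonneg_left h hc.le
  have l1 : c * (-(c⁻¹ * q) - s) = -q - s * c := by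
    field_simp
  have l2 : c * -(α * c⁻¹) = -α := by
    field_simp
  rw [l1, l2] at h1
  linarith

lemma key_step [IsTopologicalAddGroup X] [ContinuousSMul ℝ X] [LocallyConvexSpace ℝ X]
    {I : Type*} {C : Set X} (hCne : C.Nonempty) (hCcl : IsClosed C) (hCcv : Convex ℝ C)
    {f : I → X → EReal} (hf : ∀ i, InGamma (f i)) {g : X → EReal} (hg : InGamma g)
    (p : WeakDual ℝ X) (r : ℝ)
    (hpr : ∀ x ∈ solSet C f, ((p x - r : ℝ) : EReal) ≤ g x)
    (x₀ : X) (c : ℝ) (hc : 0 < c) (α : ℝ)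
    (hL : ∀ w ∈ epiFn (conjFn g) + charCone C f, α ≤ w.1 x₀ + w.2 * c) :
    α ≤ p x₀ + r * c := by
  obtain ⟨q₀, s₀, hmin₀⟩ := exists_minorant hg
  have hq₀ : (q₀, s₀) ∈ epiFn (conjFn g) := (mem_epi_conj_iff hg.1 _).2 hmin₀
  set y := -(c⁻¹ • x₀) with hy
  have happly : ∀ q : WeakDual ℝ X, q y = -(c⁻¹ * q x₀) := by
    intro q; rw [hy, map_neg, map_smul, smul_eq_mul]
  have hepi_le : ∀ w ∈ epiFn (conjFn g), α ≤ w.1 x₀ + w.2 * c := by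
    intro w hw
    have hmem : w + 0 ∈ epiFn (conjFn g) + charCone C f :=
      Set.add_mem_add hw (zero_mem_coneGen _)
    rw [add_zero] at hmem
    exact hL w hmem
  have hq₀le : α ≤ q₀ x₀ + s₀ * c := hepi_le _ hq₀
  have hbase : ∀ v ∈ (epiFn (conjFn (indicatorE C)) ∪ ⋃ i, epiFn (conjFn (f i))),
      0 ≤ v.1 x₀ + v.2 * c := by
    intro v hv
    by_contra hneg
    push_neg at hneg
    set d := v.1 x₀ + v.2 * c with hd
    set t := ((q₀ x₀ + s₀ * c) - α + 1) / (-d) with ht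
    have hdpos : 0 < -d := by linarith
    have htpos : 0 ≤ t := by
      apply div_nonneg _ hdpos.le
      linarith
    have hmem : (q₀, s₀) + t • v ∈ epiFn (conjFn g) + charCone C f :=
      Set.add_mem_add hq₀ (smul_mem_coneGen htpos hv)
    have h1 := hL _ hmem
    have e1 : ((q₀, s₀) + t • v).1 x₀ = q₀ x₀ + t * v.1 x₀ := rfl
    have e2 : ((q₀, s₀) + t • v).2 = s₀ + t * v.2 := rfl
    rw [e1, e2] at h1
    have e3 : t * (-d) = (q₀ x₀ + s₀ * c) - α + 1 := div_mul_cancel₀ _ hdpos.ne'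
    have e4 : q₀ x₀ + t * v.1 x₀ + (s₀ + t * v.2) * c = (q₀ x₀ + s₀ * c) + t * d := by
      rw [hd]; ring
    rw [e4] at h1
    nlinarith
  have hyC : y ∈ C := by
    have h := fenchelMoreau (inGamma_indicator hCne hCcl hCcv) y 0 ?_
    · by_contra hyC
      rw [indicatorE, if_neg hyC] at h
      exact (by simp : ¬ ((⊤ : EReal) ≤ (((0:ℝ)) : EReal))) h
    · intro q s hqs
      have hmem : (q, s) ∈ epiFn (conjFn (indicatorE C)) :=
        (mem_epi_conj_iff (indicatorE_ne_bot C) _).2 hqs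
      have h0 := hbase (q, s) (Or.inl hmem)
      have := inv_step hc (by linarith : (0:ℝ) ≤ q x₀ + s * c)
      rw [happly q]
      simpa using this
  have hyf : ∀ i, f i y ≤ (0 : EReal) := by
    intro i
    have h := fenchelMoreau (hf i) y 0 ?_
    · rwa [EReal.coe_zero] at h
    · intro q s hqs
      have hmem : (q, s) ∈ epiFn (conjFn (f i)) :=
        (mem_epi_conj_iff (hf i).1 _).2 hqs
      have h0 := hbase (q, s) (Or.inr (Set.mem_iUnion.2 ⟨i, hmem⟩))
      have := inv_step hc (by linarith : (0:ℝ) ≤ q x₀ + s * c)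
      rw [happly q]
      simpa using this
  have hyA : y ∈ solSet C f := ⟨hyC, hyf⟩
  have hgy : g y ≤ ((-(α * c⁻¹) : ℝ) : EReal) := by
    apply fenchelMoreau hg y
    intro q s hqs
    have hmem : (q, s) ∈ epiFn (conjFn g) := (mem_epi_conj_iff hg.1 _).2 hqs
    have h0 := hepi_le _ hmem
    have := inv_step hc h0
    rw [happly q]
    linarith
  have hfin : ((p y - r : ℝ) : EReal) ≤ ((-(α * c⁻¹) : ℝ) : EReal) :=
    le_trans (hpr y hyA) hgy
  rw [EReal.coe_le_coe_iff, happly p] at hfin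
  exact inv_step2 hc (by linarith)


/-- Lemma 3: `w*-cl (epi f* + K) = epi (f + δ_A)*` whenever `A ∩ dom f ≠ ∅`. -/
theorem stmt3 [IsTopologicalAddGroup X] [ContinuousSMul ℝ X] [LocallyConvexSpace ℝ X] [T2Space X] {I : Type*} (C : Set X) (hCne : C.Nonempty) (hCcl : IsClosed C) (hCcv : Convex ℝ C)
    (f : I → X → EReal) (hf : ∀ i, InGamma (f i))
    (g : X → EReal) (hg : InGamma g)
    (hA : (solSet C f ∩ domFn g).Nonempty) :
    closure (epiFn (conjFn g) + charCone C f) =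
      epiFn (conjFn (fun x => g x + indicatorE (solSet C f) x)) := by
  have hgbot : ∀ x, g x ≠ ⊥ := hg.1
  have hfbot : ∀ i x, f i x ≠ ⊥ := fun i => (hf i).1
  apply Set.Subset.antisymm
  · exact closure_minimal (sum_subset hgbot hfbot) (isClosed_epi_conj _)
  · rintro ⟨p, r⟩ hw
    by_contra hnot
    have hchar : ∀ x ∈ solSet C f, ((p x - r : ℝ) : EReal) ≤ g x :=
      (mem_epi_conj_add_indicator_iff hgbot _).1 hw
    have hconvL : Convex ℝ (epiFn (conjFn g) + charCone C f) :=
      (convex_epi_conj hgbot).add (convex_coneGen _)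
    haveI : LocallyConvexSpace ℝ (WeakDual ℝ X) := WeakBilin.locallyConvexSpace
    obtain ⟨F, u, hFlt, hFgt⟩ :=
      geometric_hahn_banach_closed_point hconvL.closure isClosed_closure hnot
    obtain ⟨x₁, hx₁⟩ := weakdual_dual_repr (F.comp (ContinuousLinearMap.inl ℝ (WeakDual ℝ X) ℝ))
    have hdec : ∀ z : WeakDual ℝ X × ℝ, F z = z.1 x₁ + z.2 * F (0, 1) := by
      intro z
      rw [prod_decomp F z]
      congr 1
      have : F (z.1, 0) = (F.comp (ContinuousLinearMap.inl ℝ (WeakDual ℝ X) ℝ)) z.1 := rfl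
      rw [this, hx₁ z.1]
    set cc := -(F (0, 1)) with hcc
    have hLlt : ∀ w ∈ epiFn (conjFn g) + charCone C f, -u < w.1 (-x₁) + w.2 * cc := by
      intro w hw'
      have h1 := hFlt w (subset_closure hw')
      rw [hdec w] at h1
      have e : w.1 (-x₁) = -(w.1 x₁) := map_neg w.1 x₁
      rw [e, hcc]; linarith
    have hpt : p (-x₁) + r * cc < -u := by
      have h1 := hFgt
      rw [hdec (p, r)] at h1
      have e : p (-x₁) = -(p x₁) := map_neg p x₁
      rw [e, hcc]
      simp only at h1
      linarith
    obtain ⟨q₀, s₀, hmin₀⟩ := exists_minorant hg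
    have hq₀mem : ∀ ρ : ℝ, s₀ ≤ ρ → (q₀, ρ) ∈ epiFn (conjFn g) := by
      intro ρ hρ
      rw [mem_epi_conj_iff hgbot]
      intro x
      refine le_trans ?_ (hmin₀ x)
      rw [EReal.coe_le_coe_iff]
      simp only
      linarith
    have hvert : ∀ ρ : ℝ, s₀ ≤ ρ → -u < q₀ (-x₁) + ρ * cc := by
      intro ρ hρ
      have hmem : (q₀, ρ) + 0 ∈ epiFn (conjFn g) + charCone C f :=
        Set.add_mem_add (hq₀mem ρ hρ) (zero_mem_coneGen _)
      rw [add_zero] at hmem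
      exact hLlt _ hmem
    have hccnn : 0 ≤ cc := by
      by_contra hneg
      push_neg at hneg
      set K := q₀ (-x₁) with hK
      have h3 : (-u - K) / cc ≤ max s₀ ((-u - K) / cc) := le_max_right _ _
      have h4 : (max s₀ ((-u - K) / cc)) * cc ≤ ((-u - K) / cc) * cc :=
        mul_le_mul_of_nonpos_right h3 hneg.le
      rw [div_mul_cancel₀ _ hneg.ne] at h4
      have h5 := hvert _ (le_max_left s₀ ((-u - K) / cc))
      linarith
    rcases hccnn.lt_or_eq with hpos | heq0
    · -- cc > 0
      have hks := key_step hCne hCcl hCcv hf hg p r hchar (-x₁) cc hpos (-u)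
        (fun w hw' => (hLlt w hw').le)
      linarith
    · -- cc = 0
      obtain ⟨a, haA, hadom⟩ := hA
      have hga : g a = (((g a).toReal : ℝ) : EReal) :=
        (EReal.coe_toReal (by exact hadom.ne) (hgbot a)).symm
      set γ := (g a).toReal with hγ
      have h2 : ∀ w ∈ epiFn (conjFn g) + charCone C f, w.1 a - w.2 ≤ γ := by
        intro w hw'
        have := (mem_epi_conj_add_indicator_iff hgbot w).1 (sum_subset hgbot hfbot hw') a haA
        rw [hga] at this
        rwa [EReal.coe_le_coe_iff] at this
      have hpx : p (-x₁) < -u := by rw [← heq0] at hpt; linarith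
      set M := γ - p a + r with hM
      set mx := max M 1 with hmx
      have hmxpos : (0:ℝ) < mx := lt_of_lt_of_le one_pos (le_max_right M 1)
      set ε := (-u - p (-x₁)) / (2 * mx) with hε
      have hεpos : 0 < ε := div_pos (by linarith) (by linarith)
      have hL' : ∀ w ∈ epiFn (conjFn g) + charCone C f,
          -u - ε * γ ≤ w.1 (-x₁ - ε • a) + w.2 * ε := by
        intro w hw'
        have e : w.1 (-x₁ - ε • a) = w.1 (-x₁) - ε * w.1 a := by
          rw [map_sub, map_smul, smul_eq_mul]
        rw [e]
        have h3 := hLlt w hw'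
        rw [← heq0] at h3
        have h4 := h2 w hw'
        nlinarith
      have hks := key_step hCne hCcl hCcv hf hg p r hchar (-x₁ - ε • a) ε hεpos
        (-u - ε * γ) hL'
      have e : p (-x₁ - ε • a) = p (-x₁) - ε * p a := by
        rw [map_sub, map_smul, smul_eq_mul]
      rw [e] at hks
      have h5 : ε * M ≤ ε * mx := mul_le_mul_of_nonneg_left (le_max_left M 1) hεpos.le
      have h6 : ε * mx = (-u - p (-x₁)) / 2 := by
        rw [hε]
        field_simp
      rw [hM] at h5
      nlinarith
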